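/- arXiv:1405.7333 — 5 statements merged into one kernel-verified Lean document; each statement's English description precedes it below -/
import Mathlib

section
/- Let a ∈ (-1,1) and E > 0 with E < arccos(-a)/ω_c, where ω_c = √(1-a²). Suppose ω_s ∈ [0, ω_c], and suppose τ₁, τ₂ ≥ 0 and p₁, p₂ > 0 satisfy p₁ + p₂ = 1, p₁τ₁ + p₂τ₂ = E, and p₁cos(ω_s τ₁) + p₂cos(ω_s τ₂) = -a. Let (p*, τ₂*) be the unique pair with p* ∈ (0,1), 0 < ω_s τ₂* ≤ θ_c, p*·τ₂* = E, and (1-p*) + p*·cos(ω_s τ₂*) = -a. Then p₁sin(ω_s τ₁) + p₂sin(ω_s τ₂) ≤ p*·sin(ω_s τ₂*). -/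
open Real Set

lemma aux_sin_sub_mul_cos_pos {s : ℝ} (h0 : 0 < s) (hπ : s ≤ π) :
    0 < Real.sin s - s * Real.cos s := by
  have hd : ∀ x : ℝ, HasDerivAt (fun x => Real.sin x - x * Real.cos x) (x * Real.sin x) x := by
    intro x
    have h1 := (Real.hasDerivAt_sin x)
    have h2 := (hasDerivAt_id x).mul (Real.hasDerivAt_cos x)
    have := h1.sub h2
    refine this.congr_deriv ?_
    simp only [id]
    ring
  have hm : StrictMonoOn (fun x => Real.sin x - x * Real.cos x) (Icc 0 π) := by
    apply strictMonoOn_of_deriv_pos (convex_Icc 0 π)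
    · exact (Real.continuous_sin.sub (continuous_id.mul Real.continuous_cos)).continuousOn
    · intro x hx
      rw [interior_Icc] at hx
      rw [(hd x).deriv]
      exact mul_pos hx.1 (Real.sin_pos_of_pos_of_lt_pi hx.1 hx.2)
  have := hm (left_mem_Icc.2 Real.pi_pos.le) ⟨h0.le, hπ⟩ h0
  simpa using this

lemma aux_two_sub_pos {s : ℝ} (h0 : 0 < s) (hπ : s ≤ π) :
    0 < 2 - 2 * Real.cos s - s * Real.sin s := by
  have hd : ∀ x : ℝ, HasDerivAt (fun x => 2 - 2 * Real.cos x - x * Real.sin x)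
      (Real.sin x - x * Real.cos x) x := by
    intro x
    have h1 := ((Real.hasDerivAt_cos x).const_mul (2:ℝ)).const_sub (2:ℝ)
    have h2 := (hasDerivAt_id x).mul (Real.hasDerivAt_sin x)
    have := h1.sub h2
    refine this.congr_deriv ?_
    simp only [id]
    ring
  have hm : StrictMonoOn (fun x => 2 - 2 * Real.cos x - x * Real.sin x) (Icc 0 π) := by
    apply strictMonoOn_of_deriv_pos (convex_Icc 0 π)
    · fun_prop
    · intro x hx
      rw [interior_Icc] at hx
      rw [(hd x).deriv]
      exact aux_sin_sub_mul_cos_pos hx.1 hx.2.le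
  have := hm (left_mem_Icc.2 Real.pi_pos.le) ⟨h0.le, hπ⟩ h0
  simpa using this

/-- the function h(x) = cos x + x sin x - 1 : strictly monotone on [0,π/2], strictly antitone on [π/2,π]. -/
lemma aux_h_deriv : ∀ x : ℝ, HasDerivAt (fun x => Real.cos x + x * Real.sin x - 1)
    (x * Real.cos x) x := by
  intro x
  have h1 := (Real.hasDerivAt_cos x).add ((hasDerivAt_id x).mul (Real.hasDerivAt_sin x))
  have := h1.sub_const (1:ℝ)
  refine this.congr_deriv ?_
  simp only [id]
  ring

lemma aux_h_mono : StrictMonoOn (fun x => Real.cos x + x * Real.sin x - 1) (Icc 0 (π/2)) := by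
  apply strictMonoOn_of_deriv_pos (convex_Icc 0 (π/2))
  · fun_prop
  · intro x hx
    rw [interior_Icc] at hx
    rw [(aux_h_deriv x).deriv]
    exact mul_pos hx.1 (Real.cos_pos_of_mem_Ioo ⟨by linarith [Real.pi_pos, hx.1], hx.2⟩)

lemma aux_h_anti : StrictAntiOn (fun x => Real.cos x + x * Real.sin x - 1) (Icc (π/2) π) := by
  apply strictAntiOn_of_deriv_neg (convex_Icc (π/2) π)
  · fun_prop
  · intro x hx
    rw [interior_Icc] at hx
    rw [(aux_h_deriv x).deriv]
    have hcos : Real.cos x < 0 := Real.cos_neg_of_pi_div_two_lt_of_lt hx.1 (by linarith [Real.pi_pos, hx.2])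
    have : 0 < x := lt_trans (by positivity) hx.1
    nlinarith

-- assume previous lemmas; test θc facts
lemma aux_theta_c_gt {θc : ℝ} (hmem : θc ∈ Ioo 0 π)
    (heq : Real.cos θc + θc * Real.sin θc - 1 = 0) : π/2 < θc := by
  by_contra h
  push_neg at h
  have h0 : (0:ℝ) ∈ Icc 0 (π/2) := left_mem_Icc.2 (by positivity)
  have := aux_h_mono h0 ⟨hmem.1.le, h⟩ hmem.1
  simp at this
  linarith

lemma aux_h_pos {θc : ℝ} (hmem : θc ∈ Ioo 0 π)
    (heq : Real.cos θc + θc * Real.sin θc - 1 = 0)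
    {s : ℝ} (h0 : 0 < s) (hlt : s < θc) : 0 < Real.cos s + s * Real.sin s - 1 := by
  have hgt := aux_theta_c_gt hmem heq
  rcases le_or_gt s (π/2) with hle | hgt2
  · have h0' : (0:ℝ) ∈ Icc 0 (π/2) := left_mem_Icc.2 (by positivity)
    have := aux_h_mono h0' ⟨h0.le, hle⟩ h0
    simpa using this
  · have := aux_h_anti ⟨hgt2.le, by linarith [hmem.2]⟩ ⟨hgt.le, hmem.2.le⟩ hlt
    simp only at this
    linarith

/-- strict positivity of k(θ)=cos θ - 1 + c θ away from 0 and θc -/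
lemma aux_k_pos {θc : ℝ} (hmem : θc ∈ Ioo (π/2) π)
    (heq : Real.cos θc + θc * Real.sin θc - 1 = 0)
    {θ : ℝ} (h0 : 0 ≤ θ) (hne0 : θ ≠ 0) (hnec : θ ≠ θc) :
    0 < Real.cos θ - 1 + Real.sin θc * θ := by
  set c := Real.sin θc with hc
  set β := π - θc with hβ
  have hπ := Real.pi_pos
  have hβmem : 0 < β ∧ β < π/2 := ⟨by simp [hβ]; linarith [hmem.2], by simp [hβ]; linarith [hmem.1]⟩
  have hsinβ : Real.sin β = c := by rw [hβ, Real.sin_pi_sub]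
  have hkd : ∀ x : ℝ, HasDerivAt (fun x => Real.cos x - 1 + c * x) (c - Real.sin x) x := by
    intro x
    have := ((Real.hasDerivAt_cos x).sub_const 1).add ((hasDerivAt_id x).const_mul c)
    refine this.congr_deriv ?_
    try simp only [id]
    ring
  have hcont : Continuous (fun x => Real.cos x - 1 + c * x) := by fun_prop
  -- strict mono on [0, β]
  have hm1 : StrictMonoOn (fun x => Real.cos x - 1 + c * x) (Icc 0 β) := by
    apply strictMonoOn_of_deriv_pos (convex_Icc _ _) hcont.continuousOn
    intro x hx
    rw [interior_Icc] at hx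
    rw [(hkd x).deriv]
    have : Real.sin x < Real.sin β := Real.strictMonoOn_sin
      ⟨by linarith [hx.1], by linarith [hx.2, hβmem.2]⟩
      ⟨by linarith [hβmem.1], hβmem.2.le⟩ hx.2
    linarith [this, hsinβ]
  -- strict anti on [β, θc]
  have hm2 : StrictAntiOn (fun x => Real.cos x - 1 + c * x) (Icc β θc) := by
    apply strictAntiOn_of_deriv_neg (convex_Icc _ _) hcont.continuousOn
    intro x hx
    rw [interior_Icc] at hx
    rw [(hkd x).deriv]
    have hsin : c < Real.sin x := by
      rcases le_or_gt x (π/2) with hle | hgt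
      · have : Real.sin β < Real.sin x := Real.strictMonoOn_sin
          ⟨by linarith [hβmem.1], hβmem.2.le⟩ ⟨by linarith [hβmem.1, hx.1], hle⟩ hx.1
        linarith [hsinβ]
      · have hx2 : Real.sin x = Real.sin (π - x) := (Real.sin_pi_sub x).symm
        have : Real.sin β < Real.sin (π - x) := Real.strictMonoOn_sin
          ⟨by linarith [hβmem.1], hβmem.2.le⟩ ⟨by linarith [hgt, hx.2, hmem.2], by linarith [hgt]⟩
          (by simp [hβ]; exact hx.2)
        linarith [hsinβ, hx2]
    linarith
  -- strict mono on [θc, π]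
  have hm3 : StrictMonoOn (fun x => Real.cos x - 1 + c * x) (Icc θc π) := by
    apply strictMonoOn_of_deriv_pos (convex_Icc _ _) hcont.continuousOn
    intro x hx
    rw [interior_Icc] at hx
    rw [(hkd x).deriv]
    have hx2 : Real.sin x = Real.sin (π - x) := (Real.sin_pi_sub x).symm
    have : Real.sin (π - x) < Real.sin β := Real.strictMonoOn_sin
      ⟨by linarith [hx.2], by linarith [hx.1, hmem.1]⟩
      ⟨by linarith [hβmem.1], hβmem.2.le⟩ (by simp [hβ]; exact hx.1)
    linarith [hsinβ, hx2]
  have hk0 : (fun x => Real.cos x - 1 + c * x) 0 = 0 := by simp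
  have hkθc : (fun x => Real.cos x - 1 + c * x) θc = 0 := by
    show Real.cos θc - 1 + c * θc = 0
    linarith [heq]
  have hcpos : 0 < c := by
    rw [hc]; exact Real.sin_pos_of_pos_of_lt_pi (by linarith [hmem.1]) hmem.2
  have hβθc : β < θc := by simp only [hβ]; linarith [hmem.1]
  -- now case analysis on θ
  have hθpos : 0 < θ := lt_of_le_of_ne h0 (Ne.symm hne0)
  rcases le_or_gt θ β with h1 | h1
  · have := hm1 (left_mem_Icc.2 hβmem.1.le) ⟨h0, h1⟩ hθpos
    rw [hk0] at this
    exact this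
  rcases lt_or_lt_iff_ne.2 hnec with h2 | h2
  · have := hm2 ⟨h1.le, h2.le⟩ (right_mem_Icc.2 hβθc.le) h2
    rw [hkθc] at this
    exact this
  rcases le_or_gt θ π with h3 | h3
  · have := hm3 (left_mem_Icc.2 (by linarith [hmem.2])) ⟨h2.le, h3⟩ h2
    rw [hkθc] at this
    exact this
  · have hπval : 0 < (fun x => Real.cos x - 1 + c * x) π := by
      have := hm3 (left_mem_Icc.2 (by linarith [hmem.2])) (right_mem_Icc.2 (by linarith [hmem.2])) hmem.2
      rw [hkθc] at this
      exact this
    have hπval' : c * π - 2 > 0 := by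
      have : Real.cos π = -1 := Real.cos_pi
      simp only at hπval
      linarith [hπval, this]
    have : c * π < c * θ := by exact (mul_lt_mul_iff_right₀ hcpos).2 h3
    have hcosθ : -1 ≤ Real.cos θ := Real.neg_one_le_cos θ
    show 0 < Real.cos θ - 1 + c * θ
    nlinarith

lemma aux_g_nonneg {B D s : ℝ} (hD : 0 ≤ D) (hB : 1 ≤ B) (hs0 : 0 < s) (hsπ : s ≤ π)
    (hms : Real.arctan D ≤ s)
    (hgs : B * s - Real.sin s - D * (1 - Real.cos s) = 0)
    (hg's : B - Real.cos s - D * Real.sin s = 0) :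
    ∀ θ, 0 ≤ θ → 0 ≤ B * θ - Real.sin θ - D * (1 - Real.cos θ) := by
  have hπ := Real.pi_pos
  set g : ℝ → ℝ := fun θ => B * θ - Real.sin θ - D * (1 - Real.cos θ) with hgdef
  set g1 : ℝ → ℝ := fun θ => B - Real.cos θ - D * Real.sin θ with hg1def
  have hgd : ∀ x : ℝ, HasDerivAt g (g1 x) x := by
    intro x
    have := (((hasDerivAt_id x).const_mul B).sub (Real.hasDerivAt_sin x)).sub
      (((Real.hasDerivAt_cos x).const_sub 1).const_mul D)
    refine this.congr_deriv ?_
    try simp only [id]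
    ring
  have hg1d : ∀ x : ℝ, HasDerivAt g1 (Real.sin x - D * Real.cos x) x := by
    intro x
    have := ((Real.hasDerivAt_cos x).const_sub B).sub ((Real.hasDerivAt_sin x).const_mul D)
    refine this.congr_deriv ?_
    try simp only [id]
    ring
  have hgcont : Continuous g := by fun_prop
  have hg1cont : Continuous g1 := by fun_prop
  set m := Real.arctan D with hm
  have hm0 : 0 ≤ m := by
    have : Real.arctan 0 ≤ Real.arctan D := Real.arctan_strictMono.monotone hD
    rwa [Real.arctan_zero] at this
  have hmπ2 : m < π / 2 := Real.arctan_lt_pi_div_two D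
  have hsqpos : (0:ℝ) < Real.sqrt (1 + D ^ 2) := Real.sqrt_pos.2 (by positivity)
  have hkey : ∀ x : ℝ, Real.sin x - D * Real.cos x = Real.sqrt (1 + D ^ 2) * Real.sin (x - m) := by
    intro x
    rw [Real.sin_sub, hm, Real.sin_arctan, Real.cos_arctan]
    field_simp
  have sign_pos : ∀ x : ℝ, m ≤ x → x ≤ π → 0 ≤ Real.sin x - D * Real.cos x := by
    intro x h1 h2
    rw [hkey]
    apply mul_nonneg hsqpos.le
    exact Real.sin_nonneg_of_nonneg_of_le_pi (by linarith) (by linarith)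
  have sign_neg : ∀ x : ℝ, 0 ≤ x → x ≤ m → Real.sin x - D * Real.cos x ≤ 0 := by
    intro x h1 h2
    rw [hkey]
    apply mul_nonpos_of_nonneg_of_nonpos hsqpos.le
    exact Real.sin_nonpos_of_nonpos_of_neg_pi_le (by linarith) (by linarith)
  have hg1mono : MonotoneOn g1 (Icc m π) := by
    apply monotoneOn_of_deriv_nonneg (convex_Icc _ _) hg1cont.continuousOn
    · exact fun x _ => ((hg1d x).differentiableAt).differentiableWithinAt
    · intro x hx
      rw [interior_Icc] at hx
      rw [(hg1d x).deriv]
      exact sign_pos x hx.1.le hx.2.le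
  have hg1anti : AntitoneOn g1 (Icc 0 m) := by
    apply antitoneOn_of_deriv_nonpos (convex_Icc _ _) hg1cont.continuousOn
    · exact fun x _ => ((hg1d x).differentiableAt).differentiableWithinAt
    · intro x hx
      rw [interior_Icc] at hx
      rw [(hg1d x).deriv]
      exact sign_neg x hx.1.le hx.2.le
  have hg1s : g1 s = 0 := hg's
  have hg0 : g 0 = 0 := by simp [hgdef]
  have hgs0 : g s = 0 := hgs
  -- Part A : [0, s]
  have partA : ∀ θ, 0 ≤ θ → θ ≤ s → 0 ≤ g θ := by
    intro θ hθ0 hθs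
    have hanti_gen : ∀ t, m ≤ t ∨ g1 t < 0 → 0 ≤ t → t ≤ s → AntitoneOn g (Icc t s) := by
      intro t ht ht0 hts
      apply antitoneOn_of_deriv_nonpos (convex_Icc _ _) hgcont.continuousOn
      · exact fun x _ => ((hgd x).differentiableAt).differentiableWithinAt
      · intro x hx
        rw [interior_Icc] at hx
        rw [(hgd x).deriv]
        rcases le_or_gt x m with hxm | hxm
        · rcases ht with ht | ht
          · -- m ≤ t < x ≤ m so x ∈ [m, s] anyway; use mono
            have : g1 x ≤ g1 s := hg1mono ⟨by linarith [hx.1], by linarith [hx.2, hts]⟩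
              ⟨hms, hsπ⟩ (by linarith [hx.2, hts])
            linarith [hg1s]
          · have htm : t ≤ m := by linarith [hx.1, hxm]
            have : g1 x ≤ g1 t := hg1anti ⟨ht0, htm⟩ ⟨by linarith [hx.1, ht0], hxm⟩ hx.1.le
            linarith
        · have : g1 x ≤ g1 s := hg1mono ⟨hxm.le, by linarith [hx.2, hts]⟩ ⟨hms, hsπ⟩
            (by linarith [hx.2, hts])
          linarith [hg1s]
    rcases le_or_gt θ m with hθm | hθm
    · rcases le_or_gt 0 (g1 θ) with hg1θ | hg1θ
      · -- monotone on [0, θ]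
        have hmono : MonotoneOn g (Icc 0 θ) := by
          apply monotoneOn_of_deriv_nonneg (convex_Icc _ _) hgcont.continuousOn
          · exact fun x _ => ((hgd x).differentiableAt).differentiableWithinAt
          · intro x hx
            rw [interior_Icc] at hx
            rw [(hgd x).deriv]
            have : g1 θ ≤ g1 x := hg1anti ⟨hx.1.le, by linarith [hx.2]⟩ ⟨hθ0, hθm⟩
              hx.2.le
            linarith
        have := hmono (left_mem_Icc.2 hθ0) ⟨hθ0, le_refl θ⟩ hθ0
        rw [hg0] at this
        exact this
      · have hanti := hanti_gen θ (Or.inr hg1θ) hθ0 hθs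
        have := hanti ⟨le_refl θ, hθs⟩ ⟨hθs, le_refl s⟩ hθs
        rw [hgs0] at this
        linarith
    · have hanti := hanti_gen θ (Or.inl hθm.le) hθ0 hθs
      have := hanti ⟨le_refl θ, hθs⟩ ⟨hθs, le_refl s⟩ hθs
      rw [hgs0] at this
      linarith
  -- Part B : [s, π]
  have partB : ∀ θ, s ≤ θ → θ ≤ π → 0 ≤ g θ := by
    intro θ hθs hθπ
    have hmono : MonotoneOn g (Icc s θ) := by
      apply monotoneOn_of_deriv_nonneg (convex_Icc _ _) hgcont.continuousOn
      · exact fun x _ => ((hgd x).differentiableAt).differentiableWithinAt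
      · intro x hx
        rw [interior_Icc] at hx
        rw [(hgd x).deriv]
        have : g1 s ≤ g1 x := hg1mono ⟨hms, hsπ⟩ ⟨by linarith [hx.1, hms], by linarith [hx.2]⟩
          hx.1.le
        linarith [hg1s]
    have := hmono (left_mem_Icc.2 hθs) ⟨hθs, le_refl θ⟩ hθs
    rw [hgs0] at this
    linarith
  -- Part C : [π, 2π]
  have partC : ∀ θ, π ≤ θ → θ ≤ 2 * π → 0 ≤ g θ := by
    intro θ hθπ hθ2π
    have hmono : MonotoneOn g (Icc π θ) := by
      apply monotoneOn_of_deriv_nonneg (convex_Icc _ _) hgcont.continuousOn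
      · exact fun x _ => ((hgd x).differentiableAt).differentiableWithinAt
      · intro x hx
        rw [interior_Icc] at hx
        rw [(hgd x).deriv]
        have hsin : Real.sin x ≤ 0 := by
          have h1 : Real.sin (x - π) = -Real.sin x := Real.sin_sub_pi x
          have h2 : 0 ≤ Real.sin (x - π) := Real.sin_nonneg_of_nonneg_of_le_pi
            (by linarith [hx.1]) (by linarith [hx.2])
          linarith
        have hcos : Real.cos x ≤ 1 := Real.cos_le_one x
        have : 0 ≤ D * (-Real.sin x) := mul_nonneg hD (by linarith)
        show 0 ≤ B - Real.cos x - D * Real.sin x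
        nlinarith
    have h1 := hmono (left_mem_Icc.2 hθπ) ⟨hθπ, le_refl θ⟩ hθπ
    have h2 := partB π hsπ (le_refl π)
    linarith
  -- base : [0, 2π]
  have base : ∀ θ, 0 ≤ θ → θ ≤ 2 * π → 0 ≤ g θ := by
    intro θ h0 h2
    rcases le_or_gt θ s with h | h
    · exact partA θ h0 h
    rcases le_or_gt θ π with h' | h'
    · exact partB θ h.le h'
    · exact partC θ h'.le h2
  -- induction
  have ind : ∀ n : ℕ, ∀ θ, 0 ≤ θ → θ ≤ 2 * π * (n + 1) → 0 ≤ g θ := by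
    intro n
    induction n with
    | zero => intro θ h0 h1; exact base θ h0 (by push_cast at h1; linarith)
    | succ k ih =>
      intro θ h0 h1
      rcases le_or_gt θ (2 * π * (k + 1)) with h | h
      · exact ih θ h0 h
      · have hθ' : 0 ≤ θ - 2 * π := by
          have : (2:ℝ) * π ≤ 2 * π * (k + 1) := by
            have : (1:ℝ) ≤ (k:ℝ) + 1 := by have := Nat.cast_nonneg (α := ℝ) k; linarith
            nlinarith
          linarith
        have hθ'' : θ - 2 * π ≤ 2 * π * (k + 1) := by push_cast at h1 ⊢; nlinarith
        have hrec := ih (θ - 2 * π) hθ' hθ''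
        have heq : g θ = g (θ - 2 * π) + 2 * π * B := by
          simp only [hgdef]
          rw [Real.sin_sub_two_pi, Real.cos_sub_two_pi]
          ring
        have : 0 ≤ 2 * π * B := by positivity
        linarith
  intro θ hθ
  obtain ⟨n, hn⟩ := exists_nat_ge (θ / (2 * π))
  have : θ ≤ 2 * π * (n + 1) := by
    have h2π : (0:ℝ) < 2 * π := by linarith
    have := (div_le_iff₀ h2π).1 hn
    nlinarith [this, h2π]
  exact ind n θ hθ this

/-- degenerate case : the constraints force the measure to be the star measure -/
lemma case_deg {θc p₁ p₂ θ₁ θ₂ ps a : ℝ} (hmem : θc ∈ Ioo (π/2) π)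
    (heq : Real.cos θc + θc * Real.sin θc - 1 = 0)
    (hp₁ : 0 < p₁) (hp₂ : 0 < p₂) (hsum : p₁ + p₂ = 1)
    (hθ₁0 : 0 ≤ θ₁) (hθ₂0 : 0 ≤ θ₂) (hps0 : 0 < ps) (hps1 : ps < 1)
    (hM : p₁ * θ₁ + p₂ * θ₂ = ps * θc)
    (hC : p₁ * Real.cos θ₁ + p₂ * Real.cos θ₂ = -a)
    (hCs : (1 - ps) + ps * Real.cos θc = -a) :
    p₁ * Real.sin θ₁ + p₂ * Real.sin θ₂ ≤ ps * Real.sin θc := by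
  have hπ := Real.pi_pos
  have hθc0 : 0 < θc := lt_trans (by positivity) hmem.1
  set c := Real.sin θc with hc
  -- value of k at a point θ
  have knonneg : ∀ θ : ℝ, 0 ≤ θ → 0 ≤ Real.cos θ - 1 + c * θ := by
    intro θ h0
    rcases eq_or_ne θ 0 with rfl | hne0
    · simp
    rcases eq_or_ne θ θc with rfl | hnec
    · have : Real.cos θ - 1 + c * θ = 0 := by rw [hc]; linarith [heq]
      linarith
    · exact (aux_k_pos hmem heq h0 hne0 hnec).le
  have hkey : p₁ * (Real.cos θ₁ - 1 + c * θ₁) + p₂ * (Real.cos θ₂ - 1 + c * θ₂) = 0 := by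
    have h1 : c * (p₁ * θ₁ + p₂ * θ₂) = c * (ps * θc) := by rw [hM]
    nlinarith [hC, hsum, hCs, heq, h1]
  have hk1 : Real.cos θ₁ - 1 + c * θ₁ = 0 := by
    nlinarith [knonneg θ₁ hθ₁0, knonneg θ₂ hθ₂0, mul_nonneg hp₁.le (knonneg θ₁ hθ₁0),
      mul_nonneg hp₂.le (knonneg θ₂ hθ₂0)]
  have hk2 : Real.cos θ₂ - 1 + c * θ₂ = 0 := by
    nlinarith [knonneg θ₁ hθ₁0, knonneg θ₂ hθ₂0, mul_nonneg hp₁.le (knonneg θ₁ hθ₁0),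
      mul_nonneg hp₂.le (knonneg θ₂ hθ₂0)]
  have hθ1 : θ₁ = 0 ∨ θ₁ = θc := by
    by_contra h
    push_neg at h
    exact absurd hk1 (ne_of_gt (aux_k_pos hmem heq hθ₁0 h.1 h.2))
  have hθ2 : θ₂ = 0 ∨ θ₂ = θc := by
    by_contra h
    push_neg at h
    exact absurd hk2 (ne_of_gt (aux_k_pos hmem heq hθ₂0 h.1 h.2))
  rcases hθ1 with h1 | h1 <;> rcases hθ2 with h2 | h2
  · exfalso
    rw [h1, h2] at hM
    nlinarith
  · rw [h1, h2] at hM ⊢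
    have hp2 : p₂ = ps := by
      have h' : p₂ * θc = ps * θc := by linarith [hM]
      exact mul_right_cancel₀ (ne_of_gt hθc0) h'
    rw [hp2, Real.sin_zero]
    linarith
  · rw [h1, h2] at hM ⊢
    have hp1 : p₁ = ps := by
      have h' : p₁ * θc = ps * θc := by linarith [hM]
      exact mul_right_cancel₀ (ne_of_gt hθc0) h'
    rw [hp1, Real.sin_zero]
    linarith
  · exfalso
    rw [h1, h2] at hM
    have h' : (p₁ + p₂) * θc = ps * θc := by linarith [hM]
    rw [hsum] at h'
    have : ps = 1 := by
      have := mul_right_cancel₀ (ne_of_gt hθc0) h'.symm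
      linarith
    linarith

lemma case_lt {s p₁ p₂ θ₁ θ₂ ps a : ℝ} (hs0 : 0 < s) (hsπ : s ≤ π)
    (hhs : 0 < Real.cos s + s * Real.sin s - 1)
    (hp₁ : 0 < p₁) (hp₂ : 0 < p₂) (hsum : p₁ + p₂ = 1)
    (hθ₁0 : 0 ≤ θ₁) (hθ₂0 : 0 ≤ θ₂)
    (hM : p₁ * θ₁ + p₂ * θ₂ = ps * s)
    (hC : p₁ * Real.cos θ₁ + p₂ * Real.cos θ₂ = -a)
    (hCs : (1 - ps) + ps * Real.cos s = -a) :
    p₁ * Real.sin θ₁ + p₂ * Real.sin θ₂ ≤ ps * Real.sin s := by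
  have hπ := Real.pi_pos
  set hv : ℝ := Real.cos s + s * Real.sin s - 1 with hhv
  set D : ℝ := (Real.sin s - s * Real.cos s) / hv with hD
  set B : ℝ := (1 - Real.cos s) / hv with hB
  have hvne : hv ≠ 0 := ne_of_gt hhs
  have hD0 : 0 ≤ D := div_nonneg (aux_sin_sub_mul_cos_pos hs0 hsπ).le hhs.le
  have hB1 : 1 ≤ B := by
    rw [hB, le_div_iff₀ hhs]
    have := aux_two_sub_pos hs0 hsπ
    simp only [hhv]
    linarith
  have hpyth := Real.sin_sq_add_cos_sq s
  have hgs : B * s - Real.sin s - D * (1 - Real.cos s) = 0 := by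
    rw [hB, hD]
    field_simp
    rw [hhv]
    linear_combination (-s) * hpyth
  have hg's : B - Real.cos s - D * Real.sin s = 0 := by
    rw [hB, hD]
    field_simp
    rw [hhv]
    linear_combination (-1 : ℝ) * hpyth
  have hms : Real.arctan D ≤ s := by
    rcases lt_or_ge s (π / 2) with h | h
    · have hcs : 0 < Real.cos s := Real.cos_pos_of_mem_Ioo ⟨by linarith, h⟩
      have hsins : Real.sin s ≤ s := Real.sin_le hs0.le
      have htan : D ≤ Real.tan s := by
        rw [Real.tan_eq_sin_div_cos, hD, div_le_div_iff₀ hhs hcs]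
        nlinarith [hpyth]
      have := Real.arctan_strictMono.monotone htan
      rwa [Real.arctan_tan (by linarith) h] at this
    · linarith [Real.arctan_lt_pi_div_two D]
  have hg := aux_g_nonneg hD0 hB1 hs0 hsπ hms hgs hg's
  have e1 : 0 ≤ p₁ * (B * θ₁ - Real.sin θ₁ - D * (1 - Real.cos θ₁)) :=
    mul_nonneg hp₁.le (hg θ₁ hθ₁0)
  have e2 : 0 ≤ p₂ * (B * θ₂ - Real.sin θ₂ - D * (1 - Real.cos θ₂)) :=
    mul_nonneg hp₂.le (hg θ₂ hθ₂0)
  have hp1cos : ps * (1 - Real.cos s) = 1 + a := by linear_combination -hCs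
  have comb : p₁ * (B * θ₁ - Real.sin θ₁ - D * (1 - Real.cos θ₁))
      + p₂ * (B * θ₂ - Real.sin θ₂ - D * (1 - Real.cos θ₂))
      = B * (ps * s) - (p₁ * Real.sin θ₁ + p₂ * Real.sin θ₂) - D * (1 + a) := by
    linear_combination B * hM + D * hC - D * hsum
  have star : ps * Real.sin s = B * (ps * s) - D * (1 + a) := by
    linear_combination (-ps) * hgs - D * hp1cos
  linarith [e1, e2, comb, star]


/-- Paper Lemma 4.4: the extremal density `f*` maximizes `S₂(ω_s)`. -/
theorem stmt11 (θc c : ℝ)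
    (hθc_mem : θc ∈ Set.Ioo 0 Real.pi)
    (hθc_eq : 1 - θc * Real.sin θc = Real.cos θc)
    (hθc_uniq : ∀ θ ∈ Set.Ioo 0 Real.pi, 1 - θ * Real.sin θ = Real.cos θ → θ = θc)
    (hc : c = Real.sin θc)
    (a E : ℝ) (ha : a ∈ Set.Ioo (-1 : ℝ) 1) (hE : 0 < E)
    (hEbound : E < Real.arccos (-a) / Real.sqrt (1 - a ^ 2))
    (ωs : ℝ) (hωs : ωs ∈ Set.Icc 0 (Real.sqrt (1 - a ^ 2)))
    (τ₁ τ₂ p₁ p₂ : ℝ) (hτ₁ : 0 ≤ τ₁) (hτ₂ : 0 ≤ τ₂) (hp₁ : 0 < p₁) (hp₂ : 0 < p₂)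
    (hsum : p₁ + p₂ = 1) (hmean : p₁ * τ₁ + p₂ * τ₂ = E)
    (hC : p₁ * Real.cos (ωs * τ₁) + p₂ * Real.cos (ωs * τ₂) = -a)
    (pstar τstar : ℝ) (hpstar : pstar ∈ Set.Ioo (0 : ℝ) 1)
    (hτstar : 0 < ωs * τstar) (hτstar' : ωs * τstar ≤ θc)
    (hmeanstar : pstar * τstar = E)
    (hCstar : (1 - pstar) + pstar * Real.cos (ωs * τstar) = -a) :
    p₁ * Real.sin (ωs * τ₁) + p₂ * Real.sin (ωs * τ₂) ≤ pstar * Real.sin (ωs * τstar) := by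
  have hπ := Real.pi_pos
  have hθeq : Real.cos θc + θc * Real.sin θc - 1 = 0 := by linarith [hθc_eq]
  have hθchalf : π / 2 < θc := aux_theta_c_gt hθc_mem hθeq
  have hθcmem2 : θc ∈ Ioo (π / 2) π := ⟨hθchalf, hθc_mem.2⟩
  have hω0 : 0 ≤ ωs := hωs.1
  have hs0 : 0 < ωs * τstar := hτstar
  have hθ₁0 : 0 ≤ ωs * τ₁ := mul_nonneg hω0 hτ₁
  have hθ₂0 : 0 ≤ ωs * τ₂ := mul_nonneg hω0 hτ₂
  have hM : p₁ * (ωs * τ₁) + p₂ * (ωs * τ₂) = pstar * (ωs * τstar) := by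
    linear_combination ωs * hmean - ωs * hmeanstar
  rcases eq_or_lt_of_le hτstar' with hEq | hLt
  · rw [hEq] at hCstar hM ⊢
    exact case_deg hθcmem2 hθeq hp₁ hp₂ hsum hθ₁0 hθ₂0 hpstar.1 hpstar.2 hM hC hCstar
  · have hsπ : ωs * τstar ≤ π := by linarith [hθc_mem.2]
    have hhs : 0 < Real.cos (ωs * τstar) + (ωs * τstar) * Real.sin (ωs * τstar) - 1 :=
      aux_h_pos hθc_mem hθeq hs0 hLt
    exact case_lt hs0 hsπ hhs hp₁ hp₂ hsum hθ₁0 hθ₂0 hM hC hCstar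
end

section
/- Let a ∈ (-1,1), p ∈ (0,1], τ* > 0 and ω_s > 0 with 0 < ω_s τ* ≤ π. Assume p·τ* < arccos(-a)/√(1-a²) and (1-p) + p·cos(ω_s τ*) = -a. Then p·sin(ω_s τ*) < ω_s. -/
/-- Paper, proof of Theorem 4.5 (case n = 2): the key estimate `S*(ω_s) < ω_s`. -/
theorem stmt12 (a p τstar ωs : ℝ)
    (ha : a ∈ Set.Ioo (-1 : ℝ) 1) (hp : p ∈ Set.Ioc (0 : ℝ) 1)
    (hτ : 0 < τstar) (hω : 0 < ωs)
    (hωτ : 0 < ωs * τstar) (hωτ' : ωs * τstar ≤ Real.pi)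
    (hE : p * τstar < Real.arccos (-a) / Real.sqrt (1 - a ^ 2))
    (hC : (1 - p) + p * Real.cos (ωs * τstar) = -a) :
    p * Real.sin (ωs * τstar) < ωs := by
  obtain ⟨ha1, ha2⟩ := ha
  obtain ⟨hp0, hp1⟩ := hp
  set θ : ℝ := ωs * τstar with hθdef
  set θ' : ℝ := Real.arccos (-a) with hθ'def
  have hcosle : Real.cos θ ≤ -a := by
    have h1 : Real.cos θ ≤ 1 := Real.cos_le_one θ
    nlinarith
  have hcos_ge : (-1 : ℝ) ≤ Real.cos θ := Real.neg_one_le_cos θ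
  -- θ' ≤ θ
  have hθ'le : θ' ≤ θ := by
    have h := Real.monotone_arcsin hcosle
    have e1 : Real.arccos (-a) = Real.pi / 2 - Real.arcsin (-a) :=
      Real.arccos_eq_pi_div_two_sub_arcsin _
    have e2 : Real.arccos (Real.cos θ) = Real.pi / 2 - Real.arcsin (Real.cos θ) :=
      Real.arccos_eq_pi_div_two_sub_arcsin _
    have e3 : Real.arccos (Real.cos θ) = θ := Real.arccos_cos hωτ.le hωτ'
    rw [hθ'def, e1, ← e3, e2]; linarith
  have hθ'pos : 0 < θ' := Real.arccos_pos.2 (by linarith)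
  have hθ'ltpi : θ' < Real.pi := by
    rcases lt_or_eq_of_le (Real.arccos_le_pi (-a)) with h | h
    · exact h
    · exact absurd (Real.arccos_eq_pi.1 h) (by linarith)
  have hsinθ'pos : 0 < Real.sin θ' := Real.sin_pos_of_pos_of_lt_pi hθ'pos hθ'ltpi
  have hsinθnonneg : 0 ≤ Real.sin θ := Real.sin_nonneg_of_nonneg_of_le_pi hωτ.le hωτ'
  -- concavity: θ' * sin θ ≤ θ * sin θ'
  have hconc : θ' * Real.sin θ ≤ θ * Real.sin θ' := by
    have hθpos : 0 < θ := hωτ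
    have h0 : (0 : ℝ) ∈ Set.Icc (0 : ℝ) Real.pi := ⟨le_rfl, Real.pi_pos.le⟩
    have hθmem : θ ∈ Set.Icc (0 : ℝ) Real.pi := ⟨hθpos.le, hωτ'⟩
    have hb : (0:ℝ) ≤ θ' / θ := by positivity
    have hab : (0:ℝ) ≤ 1 - θ' / θ := by
      have : θ' / θ ≤ 1 := (div_le_one hθpos).2 hθ'le
      linarith
    have := strictConcaveOn_sin_Icc.concaveOn.2 h0 hθmem hab hb (by ring)
    simp only [smul_eq_mul, mul_zero, Real.sin_zero, zero_add] at this
    have hθ'eq : θ' / θ * θ = θ' := div_mul_cancel₀ _ (ne_of_gt hθpos)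
    rw [hθ'eq] at this
    have h2 : θ' / θ * Real.sin θ ≤ Real.sin θ' := by linarith
    calc θ' * Real.sin θ = (θ' / θ * Real.sin θ) * θ := by field_simp
      _ ≤ Real.sin θ' * θ := by nlinarith
      _ = θ * Real.sin θ' := by ring
  -- finish
  rcases eq_or_lt_of_le hsinθnonneg with h0 | hpos
  · rw [← h0, mul_zero]; exact hω
  · have hE' : p * τstar < θ' / Real.sin θ' := by
      rw [hθ'def, Real.sin_arccos]
      have e : (1:ℝ) - (-a) ^ 2 = 1 - a ^ 2 := by ring
      rw [e]; exact hE
    have key : p * Real.sin θ * τstar < θ := by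
      have h1 : p * τstar * Real.sin θ' < θ' := by
        have := mul_lt_mul_of_pos_right hE' hsinθ'pos
        rwa [div_mul_cancel₀ _ (ne_of_gt hsinθ'pos)] at this
      nlinarith
    have : p * Real.sin θ < θ / τstar := by
      rw [lt_div_iff₀ hτ]; linarith
    have hθτ : θ / τstar = ωs := by field_simp; rw [hθdef]; ring
    linarith [hθτ ▸ this]
end

section
/- For all real numbers a, A with -1 < a ≤ A < 1, one has arccos(-a)/√(1-a²) ≤ arccos(-A)/√(1-A²); that is, the function x ↦ arccos(-x)/√(1-x²) is monotone nondecreasing on (-1,1). -/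
/-- Monotonicity of `x ↦ arccos(-x)/√(1-x²)` on `(-1,1)`
(used in the proof of the paper's Theorem 4.5). -/
theorem stmt13 (a A : ℝ) (ha : -1 < a) (haA : a ≤ A) (hA : A < 1) :
    Real.arccos (-a) / Real.sqrt (1 - a ^ 2) ≤
      Real.arccos (-A) / Real.sqrt (1 - A ^ 2) := by
  have ha1 : a < 1 := lt_of_le_of_lt haA hA
  have hA1 : -1 < A := lt_of_lt_of_le ha haA
  set α := Real.arccos (-a) with hαdef
  set β := Real.arccos (-A) with hβdef
  have hsa : Real.sin α = Real.sqrt (1 - a ^ 2) := by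
    rw [hαdef, Real.sin_arccos]; norm_num
  have hsA : Real.sin β = Real.sqrt (1 - A ^ 2) := by
    rw [hβdef, Real.sin_arccos]; norm_num
  have hα0 : 0 < α := Real.arccos_pos.2 (by linarith)
  have hβ0 : 0 < β := Real.arccos_pos.2 (by linarith)
  have hβπ : β < Real.pi := by
    have := Real.strictAntiOn_arccos (a := -1) (b := -A)
      ⟨le_refl _, by norm_num⟩ ⟨by linarith, by linarith⟩ (by linarith)
    rwa [Real.arccos_neg_one] at this
  have hαβ : α ≤ β :=
    Real.strictAntiOn_arccos.antitoneOn
      ⟨by linarith, by linarith⟩ ⟨by linarith, by linarith⟩ (by linarith)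
  have hαπ : α < Real.pi := lt_of_le_of_lt hαβ hβπ
  have hsinα : 0 < Real.sin α := Real.sin_pos_of_pos_of_lt_pi hα0 hαπ
  have hsinβ : 0 < Real.sin β := Real.sin_pos_of_pos_of_lt_pi hβ0 hβπ
  rw [← hsa, ← hsA, div_le_div_iff₀ hsinα hsinβ]
  -- key inequality: α * sin β ≤ β * sin α by concavity of sin on [0, π]
  have key : (α / β) * Real.sin β ≤ Real.sin α := by
    have hconc := strictConcaveOn_sin_Icc.concaveOn.2
      (show (0:ℝ) ∈ Set.Icc 0 Real.pi from ⟨le_refl _, Real.pi_pos.le⟩)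
      (show β ∈ Set.Icc 0 Real.pi from ⟨hβ0.le, hβπ.le⟩)
      (show (0:ℝ) ≤ 1 - α / β by
        have : α / β ≤ 1 := (div_le_one hβ0).2 hαβ
        linarith)
      (show (0:ℝ) ≤ α / β by positivity)
      (by ring)
    have hx : (1 - α / β) • (0 : ℝ) + (α / β) • β = α := by
      simp only [smul_eq_mul, mul_zero, zero_add]
      field_simp
    rw [hx] at hconc
    simpa using hconc
  calc α * Real.sin β = (α / β) * Real.sin β * β := by field_simp
    _ ≤ Real.sin α * β := by nlinarith
    _ = β * Real.sin α := mul_comm _ _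
end

section
/- Let θ_c ∈ (0,π) be the unique solution of 1 - θ·sin(θ) = cos(θ) on (0,π) and c = sin(θ_c). Then the function g : [0,π] → [-1,1] defined by g(x) = 1 - c·x for 0 ≤ x < θ_c and g(x) = cos(x) for θ_c ≤ x ≤ π is convex on [0,π], and g(x) ≤ cos(x) for all x ∈ [0,π]. -/
open Real Set

/-- sin is antitone on `[π/2, π]`. -/
lemma sin_anti_aux {a b : ℝ} (ha : Real.pi / 2 ≤ a) (hab : a ≤ b) (hb : b ≤ Real.pi) :
    Real.sin b ≤ Real.sin a := by
  rw [← Real.cos_sub_pi_div_two a, ← Real.cos_sub_pi_div_two b]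
  exact Real.cos_le_cos_of_nonneg_of_le_pi (by linarith) (by linarith [Real.pi_pos]) (by linarith)

lemma theta_gt_aux {θc : ℝ} (hθc_mem : θc ∈ Set.Ioo 0 Real.pi)
    (hθc_eq : 1 - θc * Real.sin θc = Real.cos θc) : Real.pi / 2 < θc := by
  by_contra h
  push_neg at h
  obtain ⟨h0, _⟩ := hθc_mem
  have h1 : 1 - θc ^ 2 / 2 ≤ Real.cos θc := Real.one_sub_sq_div_two_le_cos
  have h2 : 2 / Real.pi * θc ≤ Real.sin θc := Real.mul_le_sin h0.le h
  have hπ : Real.pi < 4 := by linarith [Real.pi_lt_d2]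
  have hπ0 := Real.pi_pos
  -- cos θc = 1 - θc * sin θc ≤ 1 - θc * (2/π * θc)
  have h3 : θc * (2 / Real.pi * θc) ≤ θc * Real.sin θc :=
    mul_le_mul_of_nonneg_left h2 h0.le
  have h4 : 1 - θc * Real.sin θc ≤ 1 - 2 / Real.pi * θc ^ 2 := by nlinarith
  have h5 : θc ^ 2 / 2 < 2 / Real.pi * θc ^ 2 := by
    have : (1 : ℝ) / 2 < 2 / Real.pi := by
      rw [div_lt_div_iff₀ (by norm_num) hπ0]; linarith
    nlinarith [pow_pos h0 2]
  linarith [hθc_eq ▸ h4, h1]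

/-- Paper Definition 4.1: the piecewise function `g` is convex on `[0, π]`
and bounded above by `cos`. -/
theorem stmt16 (θc c : ℝ)
    (hθc_mem : θc ∈ Set.Ioo 0 Real.pi)
    (hθc_eq : 1 - θc * Real.sin θc = Real.cos θc)
    (hθc_uniq : ∀ θ ∈ Set.Ioo 0 Real.pi, 1 - θ * Real.sin θ = Real.cos θ → θ = θc)
    (hc : c = Real.sin θc) :
    ConvexOn ℝ (Set.Icc 0 Real.pi)
      (fun x => if x < θc then 1 - c * x else Real.cos x) ∧
    ∀ x ∈ Set.Icc (0 : ℝ) Real.pi,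
      (if x < θc then 1 - c * x else Real.cos x) ≤ Real.cos x := by
  obtain ⟨hθ0, hθπ⟩ := hθc_mem
  have hθhalf : Real.pi / 2 < θc := theta_gt_aux ⟨hθ0, hθπ⟩ hθc_eq
  have hcpos : 0 < c := hc ▸ Real.sin_pos_of_pos_of_lt_pi hθ0 hθπ
  have hglue : 1 - c * θc = Real.cos θc := by rw [hc, mul_comm]; exact hθc_eq
  set g : ℝ → ℝ := fun x => if x < θc then 1 - c * x else Real.cos x with hg
  set φ : ℝ → ℝ := fun x => if x < θc then -c else -Real.sin x with hφ
  -- derivative of g everywhere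
  have hline : ∀ x : ℝ, HasDerivAt (fun y => 1 - c * y) (-c) x := by
    intro x
    simpa using ((hasDerivAt_id x).const_mul c).const_sub 1
  have hderiv : ∀ x : ℝ, HasDerivAt g (φ x) x := by
    intro x
    rcases lt_trichotomy x θc with hx | hx | hx
    · have hev : g =ᶠ[nhds x] fun y => 1 - c * y := by
        filter_upwards [Iio_mem_nhds hx] with y hy
        simp [hg, show y < θc from hy]
      have : φ x = -c := by simp [hφ, hx]
      rw [this]
      exact (hline x).congr_of_eventuallyEq hev
    · subst hx
      have hφx : φ x = -c := by simp [hφ, hc]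
      rw [hφx]
      have hgx : g x = 1 - c * x := by simp [hg]; linarith [hglue]
      have hIic : HasDerivWithinAt g (-c) (Set.Iic x) x := by
        refine ((hline x).hasDerivWithinAt).congr ?_ hgx
        intro y hy
        rcases eq_or_lt_of_le (Set.mem_Iic.1 hy) with rfl | hy'
        · exact hgx
        · simp [hg, hy']
      have hIci : HasDerivWithinAt g (-c) (Set.Ici x) x := by
        have hcos : HasDerivWithinAt Real.cos (-Real.sin x) (Set.Ici x) x :=
          (Real.hasDerivAt_cos x).hasDerivWithinAt
        rw [hc]
        refine hcos.congr ?_ (by simp [hg])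
        intro y hy
        simp [hg, not_lt.2 (Set.mem_Ici.1 hy)]
      have := hIic.union hIci
      rwa [Set.Iic_union_Ici, hasDerivWithinAt_univ] at this
    · have hev : g =ᶠ[nhds x] Real.cos := by
        filter_upwards [Ioi_mem_nhds hx] with y hy
        simp [hg, not_lt.2 (le_of_lt (Set.mem_Ioi.1 hy))]
      have : φ x = -Real.sin x := by simp [hφ, not_lt.2 hx.le]
      rw [this]
      exact (Real.hasDerivAt_cos x).congr_of_eventuallyEq hev
  have hdiff : Differentiable ℝ g := fun x => (hderiv x).differentiableAt
  have hderiv_eq : deriv g = φ := funext fun x => (hderiv x).deriv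
  -- monotone derivative
  have hmono : MonotoneOn φ (Set.Ioo 0 Real.pi) := by
    intro x hx y hy hxy
    by_cases hxθ : x < θc
    · by_cases hyθ : y < θc
      · simp [hφ, hxθ, hyθ]
      · simp only [hφ, if_pos hxθ, if_neg hyθ]
        have : Real.sin y ≤ Real.sin θc :=
          sin_anti_aux hθhalf.le (not_lt.1 hyθ) hy.2.le
        rw [hc]; linarith
    · have hyθ : ¬ y < θc := fun h => hxθ (lt_of_le_of_lt hxy h)
      simp only [hφ, if_neg hxθ, if_neg hyθ]
      have : Real.sin y ≤ Real.sin x :=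
        sin_anti_aux (le_trans hθhalf.le (not_lt.1 hxθ)) hxy hy.2.le
      linarith
  have hconv : ConvexOn ℝ (Set.Icc 0 Real.pi) g := by
    refine MonotoneOn.convexOn_of_deriv (convex_Icc 0 Real.pi)
      hdiff.continuous.continuousOn hdiff.differentiableOn ?_
    rw [interior_Icc, hderiv_eq]
    exact hmono
  refine ⟨hconv, ?_⟩
  -- second part: g ≤ cos
  -- auxiliary function h = cos - line
  set f : ℝ → ℝ := fun x => Real.cos x - (1 - c * x) with hf
  have hfderiv : ∀ x : ℝ, HasDerivAt f (-Real.sin x + c) x := by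
    intro x
    exact ((Real.hasDerivAt_cos x).sub ((hline x))).congr_deriv (by ring)
  have hfθc : f θc = 0 := by simp [hf, hglue]
  -- f antitone on [π/2, θc]
  have hanti : AntitoneOn f (Set.Icc (Real.pi / 2) θc) := by
    refine antitoneOn_of_deriv_nonpos (convex_Icc _ _)
      (fun x _ => ((hfderiv x).differentiableAt).continuousAt.continuousWithinAt)
      (fun x _ => ((hfderiv x).differentiableAt).differentiableWithinAt) ?_
    intro x hx
    rw [interior_Icc] at hx
    rw [(hfderiv x).deriv]
    have : Real.sin θc ≤ Real.sin x := sin_anti_aux hx.1.le hx.2.le hθπ.le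
    rw [hc] at *; linarith
  have hf_nonneg_right : ∀ x ∈ Set.Icc (Real.pi / 2) θc, 0 ≤ f x := by
    intro x hx
    have := hanti hx (Set.right_mem_Icc.2 (by linarith)) hx.2
    rw [hfθc] at this; exact this
  -- f concave on [0, π/2]
  have hconc : ConcaveOn ℝ (Set.Icc 0 (Real.pi / 2)) f := by
    refine AntitoneOn.concaveOn_of_deriv (convex_Icc _ _)
      (fun x _ => ((hfderiv x).differentiableAt).continuousAt.continuousWithinAt)
      (fun x _ => ((hfderiv x).differentiableAt).differentiableWithinAt) ?_
    intro x hx y hy hxy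
    rw [interior_Icc] at hx hy
    rw [(hfderiv x).deriv, (hfderiv y).deriv]
    have : Real.sin x ≤ Real.sin y :=
      Real.sin_le_sin_of_le_of_le_pi_div_two (by linarith [Real.pi_pos, hx.1]) hy.2.le hxy
    linarith
  have hf0 : f 0 = 0 := by simp [hf]
  have hfhalf : 0 ≤ f (Real.pi / 2) :=
    hf_nonneg_right _ (Set.left_mem_Icc.2 (by linarith))
  have hπ0 := Real.pi_pos
  have hf_nonneg_left : ∀ x ∈ Set.Icc (0 : ℝ) (Real.pi / 2), 0 ≤ f x := by
    intro x hx
    obtain ⟨hx0, hx2⟩ := hx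
    set b : ℝ := x / (Real.pi / 2) with hb
    have hb0 : 0 ≤ b := by positivity
    have hb1 : b ≤ 1 := by rw [hb, div_le_one (by linarith)]; exact hx2
    have key := hconc.2 (Set.left_mem_Icc.2 (by linarith))
      (Set.right_mem_Icc.2 (by linarith))
      (show (0:ℝ) ≤ 1 - b by linarith) hb0 (by ring)
    have hxeq : (1 - b) • (0 : ℝ) + b • (Real.pi / 2) = x := by
      rw [smul_eq_mul, smul_eq_mul, hb]
      field_simp
      ring
    rw [hxeq, hf0] at key
    refine le_trans ?_ key
    rw [smul_zero, zero_add, smul_eq_mul]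
    positivity
  -- conclude
  intro x hx
  by_cases hxθ : x < θc
  · simp only [if_pos hxθ]
    have : 0 ≤ f x := by
      rcases le_or_gt x (Real.pi / 2) with h | h
      · exact hf_nonneg_left x ⟨hx.1, h⟩
      · exact hf_nonneg_right x ⟨h.le, hxθ.le⟩
    simp only [hf] at this; linarith
  · simp [hxθ]
end

section
/- Let α > 0, h > 1, k₀ > α. Let q₁, q₂, q₃ be positive integers, β₁, β₂, β₃ > 0, and p₁, p₂, p₃ ≥ 0 with p₁ + p₂ + p₃ = 1. Let f_p(τ) = Σ_{i=1}^3 p_i · (β_i^{q_i}/Γ(q_i)) τ^{q_i - 1} e^{-β_i τ} be the mixture of Gamma densities, with mean E_p = Σ_{i=1}^3 p_i q_i/β_i. If E_p < k₀π/(2αh(k₀-α)), then every complex root λ of the characteristic equation λ + (αh(k₀-α)/k₀) ∫₀^∞ e^{-λτ} f_p(τ) dτ = 0 has negative real part. -/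
open MeasureTheory Set Real

lemma myIntOn (n : ℕ) {r : ℝ} (hr : 0 < r) :
    IntegrableOn (fun τ : ℝ => τ ^ n * Real.exp (-r * τ)) (Set.Ioi 0) := by
  have A := integrableOn_rpow_mul_exp_neg_mul_rpow (p := 1) (s := n) (b := r)
    (by exact_mod_cast neg_one_lt_zero.trans_le (Nat.cast_nonneg n)) zero_lt_one hr
  refine A.congr_fun (fun x hx => ?_) measurableSet_Ioi
  simp only [Real.rpow_one, Real.rpow_natCast]

lemma myIntVal (n : ℕ) {r : ℝ} (hr : 0 < r) :
    ∫ τ in Set.Ioi (0:ℝ), τ ^ n * Real.exp (-r * τ) = (Nat.factorial n : ℝ) / r ^ (n + 1) := by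
  have A := Real.integral_rpow_mul_exp_neg_mul_Ioi (a := n + 1) (r := r)
    (by positivity) hr
  have e1 : ∀ x ∈ Set.Ioi (0:ℝ), x ^ ((n:ℝ) + 1 - 1) * Real.exp (-(r * x))
      = x ^ n * Real.exp (-r * x) := by
    intro x hx
    rw [add_sub_cancel_right, Real.rpow_natCast, neg_mul]
  rw [setIntegral_congr_fun measurableSet_Ioi e1] at A
  rw [A]
  have : ((n:ℝ) + 1) = ((n + 1 : ℕ) : ℝ) := by push_cast; ring
  rw [this, Real.rpow_natCast]
  have := Real.Gamma_nat_eq_factorial n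
  push_cast at this ⊢
  rw [this]
  rw [one_div, inv_pow, inv_mul_eq_div]

lemma key_ineq {u : ℝ} (hu : 0 ≤ u) : π / 2 * Real.sin u ≤ u + Real.cos u := by
  rcases le_or_gt (π / 2) u with hcase | hcase
  · obtain ⟨s, hs0, rfl⟩ : ∃ s, 0 ≤ s ∧ u = s + π / 2 :=
      ⟨u - π / 2, by linarith, by ring⟩
    rw [Real.sin_add_pi_div_two, Real.cos_add_pi_div_two]
    have h1 : Real.sin s ≤ s := Real.sin_le hs0
    have h2 : Real.cos s ≤ 1 := Real.cos_le_one s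
    have m : π / 2 * Real.cos s ≤ π / 2 * 1 :=
      mul_le_mul_of_nonneg_left h2 (by positivity)
    linarith
  · have key : ∀ v ∈ Set.Icc (0:ℝ) (π/2),
        Real.pi / 2 * Real.sin v - Real.cos v ≤ v := by
      intro v hv
      have hanti : AntitoneOn (fun v : ℝ => v + Real.cos v - π / 2 * Real.sin v)
          (Set.Icc 0 (π/2)) := by
        apply antitoneOn_of_deriv_nonpos (convex_Icc _ _)
        · fun_prop
        · apply Differentiable.differentiableOn; fun_prop
        · intro x hx
          rw [interior_Icc] at hx
          have hd : HasDerivAt (fun v : ℝ => v + Real.cos v - π / 2 * Real.sin v)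
              (1 + -Real.sin x - π / 2 * Real.cos x) x := by
            exact ((hasDerivAt_id x).add (Real.hasDerivAt_cos x)).sub
              ((Real.hasDerivAt_sin x).const_mul (π / 2))
          rw [hd.deriv]
          have j1 : 2 / π * x ≤ Real.sin x := Real.mul_le_sin hx.1.le hx.2.le
          have j2 : 1 - 2 / π * x ≤ Real.cos x := Real.one_sub_mul_le_cos hx.1.le hx.2.le
          have hπ : 0 < π := Real.pi_pos
          have m1 : π / 2 * (1 - 2 / π * x) ≤ π / 2 * Real.cos x :=
            mul_le_mul_of_nonneg_left j2 (by positivity)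
          have e2' : 1 - (2 / π * x) - π / 2 * (1 - 2 / π * x) = (π / 2 - x) * (2 / π - 1) := by
            field_simp
          have hfin : (π / 2 - x) * (2 / π - 1) ≤ 0 := by
            apply mul_nonpos_of_nonneg_of_nonpos
            · linarith [hx.2.le]
            · have : 2 / π ≤ 1 := by
                rw [div_le_one hπ]; exact Real.two_le_pi
              linarith
          linarith
      have h2 := hanti hv (Set.right_mem_Icc.2 (by positivity)) hv.2
      simp [Real.cos_pi_div_two, Real.sin_pi_div_two] at h2
      linarith
    have := key u ⟨hu, hcase.le⟩
    linarith

set_option maxHeartbeats 1000000 in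
/-- Paper Proposition 6.2 (neutral cooperativity): stability of the positive
steady state of the hematopoiesis model with a mixture of Gamma delay densities. -/
theorem stmt18 (α h k₀ : ℝ) (hα : 0 < α) (hh : 1 < h) (hk : α < k₀)
    (q : Fin 3 → ℕ) (hq : ∀ i, 1 ≤ q i)
    (β : Fin 3 → ℝ) (hβ : ∀ i, 0 < β i)
    (p : Fin 3 → ℝ) (hp : ∀ i, 0 ≤ p i) (hpsum : ∑ i, p i = 1)
    (fp : ℝ → ℝ)
    (hfp : fp = fun τ => ∑ i, p i * (β i ^ q i / Real.Gamma (q i))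
      * τ ^ (q i - 1) * Real.exp (-(β i) * τ))
    (Ep : ℝ) (hEp : Ep = ∑ i, p i * (q i : ℝ) / β i)
    (hstab : Ep < k₀ * Real.pi / (2 * α * h * (k₀ - α))) :
    ∀ z : ℂ,
      z + ((α * h * (k₀ - α) / k₀ : ℝ) : ℂ) *
        (∫ τ in Set.Ioi (0 : ℝ), Complex.exp (-z * τ) * (fp τ : ℂ)) = 0 →
      z.re < 0 := by
  intro z hz
  by_contra hxneg
  push_neg at hxneg
  -- notation
  set b : ℝ := α * h * (k₀ - α) / k₀ with hbdef
  have hk0 : 0 < k₀ := hα.trans hk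
  have hh0 : 0 < h := lt_trans zero_lt_one hh
  have hka : 0 < k₀ - α := by linarith
  have hb : 0 < b := by
    apply div_pos _ hk0
    positivity
  have hbE0 : b * Ep < π / 2 := by
    have hne : k₀ ≠ 0 := ne_of_gt hk0
    have h2 : b * Ep < b * (k₀ * Real.pi / (2 * α * h * (k₀ - α))) :=
      mul_lt_mul_of_pos_left hstab hb
    have h3 : b * (k₀ * Real.pi / (2 * α * h * (k₀ - α))) = π / 2 := by
      rw [hbdef]
      have h1 : α ≠ 0 := ne_of_gt hα
      have h2' : h ≠ 0 := ne_of_gt hh0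
      have h3' : k₀ - α ≠ 0 := ne_of_gt hka
      field_simp
    linarith
  clear hbdef
  have hbE : b * Ep < π / 2 := hbE0
  clear hbE0
  clear_value b
  -- nonnegativity and continuity of fp
  have hΓpos : ∀ i : Fin 3, 0 < Real.Gamma (q i) := fun i =>
    Real.Gamma_pos_of_pos (by exact_mod_cast Nat.lt_of_lt_of_le Nat.zero_lt_one (hq i))
  have hfp0 : ∀ τ : ℝ, 0 ≤ τ → 0 ≤ fp τ := by
    intro τ hτ
    rw [hfp]
    apply Finset.sum_nonneg
    intro i _
    have := hΓpos i
    have := (hβ i).le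
    have := hp i
    positivity
  have hfpcont : Continuous fp := by
    rw [hfp]
    exact continuous_finset_sum _ (fun i _ => by fun_prop)
  -- integrability of fp and of τ * fp τ on Ioi 0
  have hint_fp : IntegrableOn fp (Set.Ioi 0) := by
    rw [hfp]
    apply integrable_finset_sum
    intro i _
    have := (myIntOn (q i - 1) (hβ i)).const_mul (p i * (β i ^ q i / Real.Gamma (q i)))
    simpa [mul_assoc] using this
  have htfp_eq : ∀ τ : ℝ, τ * fp τ = ∑ i, p i * (β i ^ q i / Real.Gamma (q i))
      * τ ^ (q i - 1 + 1) * Real.exp (-(β i) * τ) := by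
    intro τ
    rw [hfp, Finset.mul_sum]
    apply Finset.sum_congr rfl
    intro i _
    ring
  have hint_tfp : IntegrableOn (fun τ => τ * fp τ) (Set.Ioi 0) := by
    rw [show (fun τ : ℝ => τ * fp τ) = fun τ => ∑ i, p i * (β i ^ q i / Real.Gamma (q i))
      * τ ^ (q i - 1 + 1) * Real.exp (-(β i) * τ) from funext htfp_eq]
    apply integrable_finset_sum
    intro i _
    have := (myIntOn (q i - 1 + 1) (hβ i)).const_mul (p i * (β i ^ q i / Real.Gamma (q i)))
    simpa [mul_assoc] using this
  -- Gamma values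
  have hΓval : ∀ i : Fin 3, Real.Gamma (q i) = (Nat.factorial (q i - 1) : ℝ) := by
    intro i
    conv_lhs => rw [show q i = (q i - 1) + 1 from (Nat.sub_add_cancel (hq i)).symm]
    rw [show ((q i - 1 + 1 : ℕ) : ℝ) = ((q i - 1 : ℕ) : ℝ) + 1 by push_cast; ring]
    exact Real.Gamma_nat_eq_factorial _
  -- ∫ fp = 1
  have hval_fp : ∫ τ in Set.Ioi (0:ℝ), fp τ = 1 := by
    rw [hfp]
    rw [integral_finset_sum _ (fun i _ => by
      have := (myIntOn (q i - 1) (hβ i)).const_mul (p i * (β i ^ q i / Real.Gamma (q i)))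
      simpa [mul_assoc] using this)]
    rw [← hpsum]
    apply Finset.sum_congr rfl
    intro i _
    simp_rw [mul_assoc, integral_const_mul]
    rw [myIntVal (q i - 1) (hβ i), hΓval i]
    have hqe : q i - 1 + 1 = q i := Nat.sub_add_cancel (hq i)
    rw [hqe]
    have hβne : (β i : ℝ) ^ q i ≠ 0 := pow_ne_zero _ (ne_of_gt (hβ i))
    have hfne : (Nat.factorial (q i - 1) : ℝ) ≠ 0 := by
      exact_mod_cast Nat.factorial_ne_zero _
    field_simp
  -- ∫ τ fp τ = Ep
  have hval_tfp : ∫ τ in Set.Ioi (0:ℝ), τ * fp τ = Ep := by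
    rw [show (fun τ : ℝ => τ * fp τ) = fun τ => ∑ i, p i * (β i ^ q i / Real.Gamma (q i))
      * τ ^ (q i - 1 + 1) * Real.exp (-(β i) * τ) from funext htfp_eq]
    rw [integral_finset_sum _ (fun i _ => by
      have := (myIntOn (q i - 1 + 1) (hβ i)).const_mul (p i * (β i ^ q i / Real.Gamma (q i)))
      simpa [mul_assoc] using this)]
    rw [hEp]
    apply Finset.sum_congr rfl
    intro i _
    simp_rw [mul_assoc, integral_const_mul]
    rw [myIntVal (q i - 1 + 1) (hβ i), hΓval i]
    have hqe : q i - 1 + 1 = q i := Nat.sub_add_cancel (hq i)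
    rw [hqe]
    have hβne : (β i : ℝ) ≠ 0 := ne_of_gt (hβ i)
    have hβpne : (β i : ℝ) ^ q i ≠ 0 := pow_ne_zero _ hβne
    have hfne : (Nat.factorial (q i - 1) : ℝ) ≠ 0 := by
      exact_mod_cast Nat.factorial_ne_zero _
    have hfacte : (Nat.factorial (q i) : ℝ) = (q i : ℝ) * (Nat.factorial (q i - 1) : ℝ) := by
      rw [← hqe, Nat.factorial_succ]
      push_cast
      ring
    rw [hfacte, pow_succ]
    field_simp
  -- complex integrand: integrability and value
  have hgcont : Continuous fun τ : ℝ => Complex.exp (-z * (τ:ℂ)) * ((fp τ : ℝ) : ℂ) := by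
    fun_prop
  have hre1 : ∀ τ : ℝ, (-z * (τ:ℂ)).re = -(z.re * τ) := by
    intro τ; simp [Complex.mul_re]
  have him1 : ∀ τ : ℝ, (-z * (τ:ℂ)).im = -(z.im * τ) := by
    intro τ; simp [Complex.mul_im]
  have hgnorm : ∀ τ ∈ Set.Ioi (0:ℝ), ‖Complex.exp (-z * (τ:ℂ)) * ((fp τ : ℝ) : ℂ)‖ ≤ fp τ := by
    intro τ hτ
    have hτ0 : (0:ℝ) < τ := hτ
    rw [norm_mul, Complex.norm_exp, Complex.norm_real, Real.norm_eq_abs,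
      abs_of_nonneg (hfp0 τ hτ0.le), hre1 τ]
    have h1 : Real.exp (-(z.re * τ)) ≤ 1 := by
      rw [Real.exp_le_one_iff]
      nlinarith
    nlinarith [hfp0 τ hτ0.le, Real.exp_pos (-(z.re * τ))]
  have hgint : IntegrableOn (fun τ : ℝ => Complex.exp (-z * (τ:ℂ)) * ((fp τ : ℝ) : ℂ))
      (Set.Ioi 0) := by
    apply Integrable.mono' hint_fp hgcont.aestronglyMeasurable
    rw [ae_restrict_iff' measurableSet_Ioi]
    exact ae_of_all _ hgnorm
  have hbC : ((b:ℝ) : ℂ) ≠ 0 := by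
    exact_mod_cast ne_of_gt hb
  have hIeq : ∫ τ in Set.Ioi (0:ℝ), Complex.exp (-z * (τ:ℂ)) * ((fp τ : ℝ) : ℂ) = -z / b := by
    rw [eq_div_iff hbC]
    linear_combination hz
  -- real part equation
  have hre : ∫ τ in Set.Ioi (0:ℝ), Real.exp (-(z.re * τ)) * Real.cos (z.im * τ) * fp τ
      = -z.re / b := by
    have h1 := integral_re hgint
    have h2 : ∀ τ ∈ Set.Ioi (0:ℝ), Real.exp (-(z.re * τ)) * Real.cos (z.im * τ) * fp τ
        = (Complex.exp (-z * (τ:ℂ)) * ((fp τ : ℝ) : ℂ)).re := by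
      intro τ hτ
      rw [Complex.mul_re]
      simp [Complex.exp_re, Complex.exp_im, hre1 τ, him1 τ, Real.cos_neg]
    rw [setIntegral_congr_fun measurableSet_Ioi h2]
    simp only [RCLike.re_to_complex] at h1
    rw [h1, hIeq]
    simp
  -- imaginary part equation
  have him : ∫ τ in Set.Ioi (0:ℝ), Real.exp (-(z.re * τ)) * Real.sin (z.im * τ) * fp τ
      = z.im / b := by
    have h1 := integral_im hgint
    have h2 : ∀ τ ∈ Set.Ioi (0:ℝ), Real.exp (-(z.re * τ)) * Real.sin (z.im * τ) * fp τ
        = -((Complex.exp (-z * (τ:ℂ)) * ((fp τ : ℝ) : ℂ)).im) := by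
      intro τ hτ
      rw [Complex.mul_im]
      simp [Complex.exp_re, Complex.exp_im, hre1 τ, him1 τ, Real.sin_neg]
    rw [setIntegral_congr_fun measurableSet_Ioi h2, integral_neg]
    simp only [RCLike.im_to_complex] at h1
    rw [h1, hIeq]
    simp only [Complex.div_ofReal_im, Complex.neg_im]
    ring
  -- absolute-value versions
  set W : ℝ := |z.im| with hWdef
  have hW0 : 0 ≤ W := abs_nonneg _
  have hsinW : ∫ τ in Set.Ioi (0:ℝ), Real.exp (-(z.re * τ)) * Real.sin (W * τ) * fp τ
      = W / b := by
    rcases abs_cases z.im with ⟨hW1, _⟩ | ⟨hW1, _⟩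
    · rw [hWdef, hW1]; exact him
    · rw [hWdef, hW1]
      simp_rw [neg_mul, Real.sin_neg, mul_neg, neg_mul]
      rw [integral_neg, him]
      ring
  have hcosW : ∫ τ in Set.Ioi (0:ℝ), Real.exp (-(z.re * τ)) * Real.cos (W * τ) * fp τ
      = -z.re / b := by
    rcases abs_cases z.im with ⟨hW1, _⟩ | ⟨hW1, _⟩
    · rw [hWdef, hW1]; exact hre
    · rw [hWdef, hW1]
      simp_rw [neg_mul, Real.cos_neg]
      exact hre
  -- integrability of the real integrands
  clear_value W
  have hint_aux : ∀ φ : ℝ → ℝ, Continuous φ → (∀ τ, |φ τ| ≤ 1) →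
      IntegrableOn (fun τ => Real.exp (-(z.re * τ)) * φ τ * fp τ) (Set.Ioi 0) := by
    intro φ hφc hφb
    apply Integrable.mono' hint_fp (Continuous.aestronglyMeasurable (by fun_prop))
    rw [ae_restrict_iff' measurableSet_Ioi]
    refine ae_of_all _ fun τ hτ => ?_
    have hτ0 : (0:ℝ) < τ := hτ
    have h1 : Real.exp (-(z.re * τ)) ≤ 1 := by
      rw [Real.exp_le_one_iff]
      nlinarith
    have h2 : 0 ≤ fp τ := hfp0 τ hτ0.le
    rw [Real.norm_eq_abs, abs_mul, abs_mul, abs_of_nonneg (Real.exp_pos _).le,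
      abs_of_nonneg h2]
    have m1 : Real.exp (-(z.re * τ)) * |φ τ| ≤ 1 * 1 :=
      mul_le_mul h1 (hφb τ) (abs_nonneg _) zero_le_one
    have m2 : Real.exp (-(z.re * τ)) * |φ τ| * fp τ ≤ 1 * 1 * fp τ :=
      mul_le_mul_of_nonneg_right m1 h2
    linarith
  have hintA : IntegrableOn (fun τ => Real.exp (-(z.re * τ)) * Real.cos (W * τ) * fp τ)
      (Set.Ioi 0) :=
    hint_aux _ (by fun_prop) (fun τ => Real.abs_cos_le_one _)
  have hintB : IntegrableOn (fun τ => Real.exp (-(z.re * τ)) * Real.sin (W * τ) * fp τ)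
      (Set.Ioi 0) :=
    hint_aux _ (by fun_prop) (fun τ => Real.abs_sin_le_one _)
  have hintC : IntegrableOn (fun τ => W * τ * (Real.exp (-(z.re * τ)) * fp τ))
      (Set.Ioi 0) := by
    apply Integrable.mono' (hint_tfp.const_mul W)
      (Continuous.aestronglyMeasurable (by fun_prop))
    rw [ae_restrict_iff' measurableSet_Ioi]
    refine ae_of_all _ fun τ hτ => ?_
    have hτ0 : (0:ℝ) < τ := hτ
    have h1 : Real.exp (-(z.re * τ)) ≤ 1 := by
      rw [Real.exp_le_one_iff]
      nlinarith
    have h2 : 0 ≤ fp τ := hfp0 τ hτ0.le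
    rw [Real.norm_eq_abs, abs_of_nonneg (by positivity)]
    have m1 : W * τ * (Real.exp (-(z.re * τ)) * fp τ) ≤ W * τ * (1 * fp τ) :=
      mul_le_mul_of_nonneg_left (mul_le_mul_of_nonneg_right h1 h2)
        (mul_nonneg hW0 hτ0.le)
    linarith
  -- the key integral inequality
  have hkey : 0 ≤ ∫ τ in Set.Ioi (0:ℝ),
      (W * τ + Real.cos (W * τ) - π / 2 * Real.sin (W * τ))
        * (Real.exp (-(z.re * τ)) * fp τ) := by
    apply setIntegral_nonneg measurableSet_Ioi
    intro τ hτ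
    have hτ0 : (0:ℝ) < τ := hτ
    have h1 := key_ineq (mul_nonneg hW0 hτ0.le)
    have h2 : 0 ≤ fp τ := hfp0 τ hτ0.le
    have h3 : 0 < Real.exp (-(z.re * τ)) := Real.exp_pos _
    apply mul_nonneg (by linarith) (by positivity)
  have hsplit : ∫ τ in Set.Ioi (0:ℝ),
      (W * τ + Real.cos (W * τ) - π / 2 * Real.sin (W * τ))
        * (Real.exp (-(z.re * τ)) * fp τ)
      = (∫ τ in Set.Ioi (0:ℝ), W * τ * (Real.exp (-(z.re * τ)) * fp τ))
        + ((∫ τ in Set.Ioi (0:ℝ), Real.exp (-(z.re * τ)) * Real.cos (W * τ) * fp τ)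
          - π / 2 * ∫ τ in Set.Ioi (0:ℝ), Real.exp (-(z.re * τ)) * Real.sin (W * τ) * fp τ) := by
    have e : ∀ τ ∈ Set.Ioi (0:ℝ),
        (W * τ + Real.cos (W * τ) - π / 2 * Real.sin (W * τ))
          * (Real.exp (-(z.re * τ)) * fp τ)
        = W * τ * (Real.exp (-(z.re * τ)) * fp τ)
          + (Real.exp (-(z.re * τ)) * Real.cos (W * τ) * fp τ
            - π / 2 * (Real.exp (-(z.re * τ)) * Real.sin (W * τ) * fp τ)) := by
      intro τ _
      ring
    have hintB2 : IntegrableOn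
        (fun τ => π / 2 * (Real.exp (-(z.re * τ)) * Real.sin (W * τ) * fp τ))
        (Set.Ioi 0) := hintB.const_mul (π / 2)
    have hintAB : IntegrableOn
        (fun τ => Real.exp (-(z.re * τ)) * Real.cos (W * τ) * fp τ
          - π / 2 * (Real.exp (-(z.re * τ)) * Real.sin (W * τ) * fp τ))
        (Set.Ioi 0) := hintA.sub hintB2
    rw [setIntegral_congr_fun measurableSet_Ioi e, integral_add hintC hintAB,
      integral_sub hintA hintB2, integral_const_mul]
  -- bound the first moment term
  have hCle : ∫ τ in Set.Ioi (0:ℝ), W * τ * (Real.exp (-(z.re * τ)) * fp τ) ≤ W * Ep := by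
    have hmono := setIntegral_mono_on hintC (hint_tfp.const_mul W) measurableSet_Ioi
      (fun τ hτ => by
        have hτ0 : (0:ℝ) < τ := hτ
        have h1 : Real.exp (-(z.re * τ)) ≤ 1 := by
          rw [Real.exp_le_one_iff]
          nlinarith
        have h2 : 0 ≤ fp τ := hfp0 τ hτ0.le
        have m1 : W * τ * (Real.exp (-(z.re * τ)) * fp τ) ≤ W * τ * (1 * fp τ) :=
          mul_le_mul_of_nonneg_left (mul_le_mul_of_nonneg_right h1 h2)
            (mul_nonneg hW0 hτ0.le)
        linarith)
    rwa [integral_const_mul, hval_tfp] at hmono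
  -- conclude
  rw [hsplit, hcosW, hsinW] at hkey
  have hkey2 : π / 2 * (W / b) + z.re / b ≤ W * Ep := by
    rw [neg_div] at hkey
    linarith
  have e2 : (π / 2 * (W / b) + z.re / b) * b = π / 2 * W + z.re := by
    field_simp
  have hkey3 : π / 2 * W + z.re ≤ W * Ep * b := by
    calc π / 2 * W + z.re = (π / 2 * (W / b) + z.re / b) * b := e2.symm
      _ ≤ W * Ep * b := mul_le_mul_of_nonneg_right hkey2 hb.le
  rcases eq_or_lt_of_le hW0 with hWz | hWpos
  · -- W = 0 : z is real, in fact z = 0, impossible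
    have him0 : z.im = 0 := by
      apply abs_eq_zero.mp
      rw [← hWdef]
      exact hWz.symm
    have hre0 : z.re = 0 := by
      have h4 : z.re ≤ 0 := by
        rw [← hWz] at hkey3
        simpa using hkey3
      linarith
    simp only [hre0, him0, zero_mul, neg_zero, Real.exp_zero, Real.cos_zero, one_mul,
      mul_one, zero_div, neg_zero] at hre
    rw [hval_fp] at hre
    norm_num at hre
  · have h5 : W * (b * Ep) < W * (π / 2) := mul_lt_mul_of_pos_left hbE hWpos
    nlinarith [hkey3, hxneg]
end
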